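/- Let γ = (γ₁, γ₂) : [a,b] → ℝ^m × ℝ^s be a Lipschitz curve satisfying the contact equation γ₂'(t) = ½ B(γ₁(t), γ₁'(t)) for a.e. t ∈ [a,b]. Then there exists a constant C > 0 depending only on B (one may take C = 1 + (‖B‖/2)^{1/2}, with ‖B‖ the operator norm of B) such that for all a ≤ τ₁ ≤ τ₂ ≤ b one has d_B(γ(τ₁), γ(τ₂)) ≤ C ∫_{τ₁}^{τ₂} |γ₁'(t)| dt. -/

import Mathlib

open MeasureTheory Topology ENNReal

open Set in
/-- A.e. fundamental theorem of calculus inequality for Lipschitz functions: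
if `f` is Lipschitz on `[a,b]` and has a.e. derivative `f'` with `‖f' t‖ ≤ φ t`,
`φ` nonnegative and integrable, then `‖f b - f a‖ ≤ ∫ φ`. -/
theorem lip_norm_sub_le_integral {E : Type*} [NormedAddCommGroup E] [NormedSpace ℝ E]
    {f : ℝ → E} {f' : ℝ → E} {φ : ℝ → ℝ} {K : NNReal} {a b : ℝ} (hab : a ≤ b)
    (hlip : LipschitzOnWith K f (Set.Icc a b))
    (hφint : IntegrableOn φ (Set.Icc a b)) (hφ0 : ∀ x, 0 ≤ φ x)
    (hder : ∀ᵐ t ∂ volume.restrict (Set.Ioo a b), HasDerivAt f (f' t) t ∧ ‖f' t‖ ≤ φ t) :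
    ‖f b - f a‖ ≤ ∫ y in a..b, φ y := by
  refine le_of_forall_pos_le_add fun ε εpos => ?_
  have hφIoc : IntervalIntegrable φ volume a b := by
    rw [intervalIntegrable_iff_integrableOn_Ioc_of_le hab]
    exact hφint.mono_set Ioc_subset_Icc_self
  -- the set of bad points (non-differentiability), together with `a`, is null
  set N : Set ℝ := (Ioo a b ∩ {t | ¬ (HasDerivAt f (f' t) t ∧ ‖f' t‖ ≤ φ t)}) ∪ {a} with hN
  have hNnull : volume N = 0 := by
    apply measure_union_null _ (measure_singleton a)
    have := ae_iff.1 hder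
    rwa [Measure.restrict_apply' measurableSet_Ioo, inter_comm] at this
  obtain ⟨U, hNU, hUopen, hUvol⟩ :=
    Set.exists_isOpen_lt_of_lt N (ENNReal.ofReal (ε / (2 * ((K : ℝ) + 1))))
      (by rw [hNnull]; exact ENNReal.ofReal_pos.2 (div_pos εpos (by positivity)))
  have hUmeas : MeasurableSet U := hUopen.measurableSet
  have hUfin : volume U < ⊤ := hUvol.trans_le le_top
  have hindint : Integrable (U.indicator fun _ => (K : ℝ)) volume :=
    (integrable_indicator_iff hUmeas).2 (integrableOn_const hUfin.ne)
  set ψ : ℝ → ℝ := fun x => φ x + U.indicator (fun _ => (K : ℝ)) x with hψdef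
  have hφψ : ∀ x, φ x ≤ ψ x := fun x =>
    le_add_of_nonneg_right (Set.indicator_nonneg (fun _ _ => K.coe_nonneg) x)
  have hψint : IntegrableOn ψ (Icc a b) := hφint.add hindint.integrableOn
  obtain ⟨G', ψ_lt_G', G'cont, G'int, G'lt_top, hG'⟩ :=
    exists_lt_lowerSemicontinuous_integral_lt (μ := volume.restrict (Icc a b)) ψ hψint
      (half_pos εpos)
  have ψ_le_G'r : ∀ᵐ x ∂ volume.restrict (Icc a b), ψ x ≤ (G' x).toReal := by
    filter_upwards [G'lt_top] with x hx
    have h2 : G' x = ((G' x).toReal : EReal) :=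
      (EReal.coe_toReal hx.ne (((EReal.bot_lt_coe _).trans (ψ_lt_G' x)).ne')).symm
    exact EReal.coe_le_coe_iff.1 ((ψ_lt_G' x).le.trans_eq h2)
  have s_closed : IsClosed ({t | ‖f t - f a‖ ≤ ∫ u in a..t, (G' u).toReal} ∩ Icc a b) := by
    have : ContinuousOn (fun t => (‖f t - f a‖, ∫ u in a..t, (G' u).toReal)) (Icc a b) := by
      have hc : ContinuousOn f (Icc a b) := hlip.continuousOn
      rw [← uIcc_of_le hab] at G'int hc ⊢
      exact ((hc.sub continuousOn_const).norm).prodMk (intervalIntegral.continuousOn_primitive_interval G'int)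
    rw [inter_comm]
    exact this.preimage_isClosed_of_isClosed isClosed_Icc isClosed_le_prod
  have main : Icc a b ⊆ {t | ‖f t - f a‖ ≤ ∫ u in a..t, (G' u).toReal} := by
    refine s_closed.Icc_subset_of_forall_exists_gt
      (by simp only [mem_setOf_eq, sub_self, norm_zero, intervalIntegral.integral_same, le_refl])
      fun t ht v t_lt_v => ?_
    have hmem : ∀ u, t ≤ u → u ≤ b → u ∈ Icc a b := fun u h1 h2 => ⟨ht.2.1.trans h1, h2⟩
    have glue : ∀ u, u ∈ Ioc t (min v b) → ‖f u - f t‖ ≤ (∫ w in t..u, (G' w).toReal) →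
        u ∈ {t | ‖f t - f a‖ ≤ ∫ u in a..t, (G' u).toReal} ∩ Ioc t v := by
      intro u hu hkey
      have hub : u ≤ b := hu.2.trans (min_le_right _ _)
      have int1 : IntervalIntegrable (fun x => (G' x).toReal) volume a t := by
        rw [intervalIntegrable_iff_integrableOn_Ioc_of_le ht.2.1]
        exact IntegrableOn.mono_set G'int fun x hx => ⟨hx.1.le, hx.2.trans ht.2.2.le⟩
      have int2 : IntervalIntegrable (fun x => (G' x).toReal) volume t u := by
        rw [intervalIntegrable_iff_integrableOn_Ioc_of_le hu.1.le]
        exact IntegrableOn.mono_set G'int fun x hx => ⟨ht.2.1.trans hx.1.le, hx.2.trans hub⟩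
      refine ⟨?_, hu.1, hu.2.trans (min_le_left _ _)⟩
      have htri : ‖f u - f a‖ ≤ ‖f t - f a‖ + ‖f u - f t‖ := by
        have := dist_triangle (f u) (f t) (f a)
        simpa [dist_eq_norm, add_comm] using this
      calc ‖f u - f a‖ ≤ ‖f t - f a‖ + ‖f u - f t‖ := htri
        _ ≤ (∫ w in a..t, (G' w).toReal) + ∫ w in t..u, (G' w).toReal := add_le_add ht.1 hkey
        _ = ∫ w in a..u, (G' w).toReal :=
          intervalIntegral.integral_add_adjacent_intervals int1 int2
    by_cases htU : t ∈ U
    · -- `t` is in the open exceptional set: use the Lipschitz bound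
      obtain ⟨r, rpos, hball⟩ := Metric.isOpen_iff.1 hUopen t htU
      set u := min (min v b) (t + r / 2) with hu
      have htu : t < u := lt_min (lt_min t_lt_v ht.2.2) (by linarith)
      have hub : u ≤ b := (min_le_left _ _).trans (min_le_right _ _)
      have huIoc : u ∈ Ioc t (min v b) := ⟨htu, min_le_left _ _⟩
      have hsub : Ioc t u ⊆ Icc a b := fun x hx => ⟨ht.2.1.trans hx.1.le, hx.2.trans hub⟩
      have hIocU : Ioc t u ⊆ U := by
        intro x hx
        apply hball
        rw [Metric.mem_ball, Real.dist_eq, abs_of_pos (sub_pos.2 hx.1)]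
        have hxu : x ≤ t + r / 2 := hx.2.trans (min_le_right _ _)
        linarith
      have hlipb : ‖f u - f t‖ ≤ (K : ℝ) * (u - t) := by
        have := hlip.norm_sub_le (hmem u htu.le hub) (hmem t le_rfl ht.2.2.le)
        rwa [Real.norm_eq_abs, abs_of_nonneg (sub_nonneg.2 htu.le)] at this
      have hKψ : (K : ℝ) * (u - t) ≤ ∫ w in t..u, ψ w := by
        rw [intervalIntegral.integral_of_le htu.le]
        have heq : (K : ℝ) * (u - t) = ∫ _ in Ioc t u, (K : ℝ) := by
          rw [setIntegral_const, measureReal_def, Real.volume_Ioc, smul_eq_mul,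
            ENNReal.toReal_ofReal (sub_nonneg.2 htu.le), mul_comm]
        rw [heq]
        apply setIntegral_mono_on
        · exact integrableOn_const (by rw [Real.volume_Ioc]; exact ofReal_ne_top)
        · exact hψint.mono_set hsub
        · exact measurableSet_Ioc
        · intro w hw
          have : U.indicator (fun _ => (K : ℝ)) w = (K : ℝ) :=
            Set.indicator_of_mem (hIocU hw) _
          simp only [hψdef]
          rw [this]
          exact le_add_of_nonneg_left (hφ0 w)
      have hψG : (∫ w in t..u, ψ w) ≤ ∫ w in t..u, (G' w).toReal := by
        rw [intervalIntegral.integral_of_le htu.le, intervalIntegral.integral_of_le htu.le]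
        apply setIntegral_mono_ae_restrict (hψint.mono_set hsub) (IntegrableOn.mono_set G'int hsub)
        exact ae_mono (Measure.restrict_mono hsub le_rfl) ψ_le_G'r
      exact ⟨u, glue u huIoc (hlipb.trans (hKψ.trans hψG))⟩
    · -- `t` is a point of differentiability
      have htN : t ∉ N := fun h => htU (hNU h)
      have htIoo : t ∈ Ioo a b := by
        rcases ht.2.1.eq_or_lt with h | h
        · exact absurd (Set.mem_union_right _ (by simp [← h])) htN
        · exact ⟨h, ht.2.2⟩
      have htP : HasDerivAt f (f' t) t ∧ ‖f' t‖ ≤ φ t := by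
        by_contra h
        exact htN (Set.mem_union_left _ ⟨htIoo, h⟩)
      obtain ⟨y, hy1, hy2⟩ : ∃ y : ℝ, (ψ t : EReal) < y ∧ (y : EReal) < G' t :=
        EReal.lt_iff_exists_real_btwn.1 (ψ_lt_G' t)
      have hy1' : ψ t < y := EReal.coe_lt_coe_iff.1 hy1
      have I1 : ∀ᶠ u in 𝓝[>] t, (u - t) * y ≤ ∫ w in t..u, (G' w).toReal := by
        have B : ∀ᶠ u in 𝓝 t, (y : EReal) < G' u := G'cont.lowerSemicontinuousAt _ _ hy2
        rcases mem_nhds_iff_exists_Ioo_subset.1 B with ⟨m, M, ⟨hm, hM⟩, H⟩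
        have : Ioo t (min M b) ∈ 𝓝[>] t := Ioo_mem_nhdsGT (lt_min hM ht.2.2)
        filter_upwards [this] with u hu
        have I : Icc t u ⊆ Icc a b := Icc_subset_Icc ht.2.1 (hu.2.le.trans (min_le_right _ _))
        calc (u - t) * y = ∫ _ in Icc t u, y := by
              simp only [MeasureTheory.integral_const, measureReal_def, smul_eq_mul, MeasurableSet.univ,
                Real.volume_Icc, Measure.restrict_apply, univ_inter,
                ENNReal.toReal_ofReal (sub_nonneg.2 hu.1.le)]
          _ ≤ ∫ w in t..u, (G' w).toReal := by
              rw [intervalIntegral.integral_of_le hu.1.le, ← integral_Icc_eq_integral_Ioc]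
              apply setIntegral_mono_ae_restrict
              · exact integrableOn_const (by rw [Real.volume_Icc]; exact ofReal_ne_top)
              · exact IntegrableOn.mono_set G'int I
              · have C1 : ∀ᵐ x : ℝ ∂volume.restrict (Icc t u), G' x < ⊤ :=
                  ae_mono (Measure.restrict_mono I le_rfl) G'lt_top
                have C2 : ∀ᵐ x : ℝ ∂volume.restrict (Icc t u), x ∈ Icc t u :=
                  ae_restrict_mem measurableSet_Icc
                filter_upwards [C1, C2] with x G'x hx
                apply EReal.coe_le_coe_iff.1
                have hxm : x ∈ Ioo m M :=
                  ⟨hm.trans_le hx.1, (hx.2.trans_lt hu.2).trans_le (min_le_left M b)⟩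
                refine (H hxm).out.le.trans_eq ?_
                exact (EReal.coe_toReal G'x.ne
                  (((EReal.bot_lt_coe _).trans (H hxm).out).ne')).symm
      have I2 : ∀ᶠ u in 𝓝[>] t, ‖f u - f t‖ ≤ (u - t) * y := by
        have hd : HasDerivWithinAt f (f' t) (Ioi t) t := htP.1.hasDerivWithinAt
        have hlt : ‖f' t‖ < y := lt_of_le_of_lt (htP.2.trans (hφψ t)) hy1'
        filter_upwards [hd.limsup_norm_slope_le hlt, self_mem_nhdsWithin] with u hu htu
        have h1 : (0 : ℝ) < u - t := sub_pos.2 htu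
        have h2 : ‖f u - f t‖ = (u - t) * (‖u - t‖⁻¹ * ‖f u - f t‖) := by
          rw [Real.norm_eq_abs, abs_of_pos h1, ← mul_assoc, mul_inv_cancel₀ h1.ne', one_mul]
        rw [h2]
        exact mul_le_mul_of_nonneg_left hu.le h1.le
      have I4 : ∀ᶠ u in 𝓝[>] t, u ∈ Ioc t (min v b) := by
        refine mem_nhdsGT_iff_exists_Ioc_subset.2 ⟨min v b, ?_, Subset.rfl⟩
        simp only [lt_min_iff, mem_Ioi]
        exact ⟨t_lt_v, ht.2.2⟩
      rcases ((I1.and I2).and I4).exists with ⟨x, ⟨hx1, hx2⟩, hx4⟩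
      exact ⟨x, glue x hx4 (hx2.trans hx1)⟩
  have hfinal : ‖f b - f a‖ ≤ ∫ u in a..b, (G' u).toReal := main (right_mem_Icc.2 hab)
  have step1 : (∫ u in a..b, (G' u).toReal) ≤ (∫ y in a..b, ψ y) + ε / 2 := by
    refine (le_of_eq ?_).trans (hG'.le.trans (le_of_eq ?_)) <;>
    · rw [intervalIntegral.integral_of_le hab]
      simp only [integral_Icc_eq_integral_Ioc', Real.volume_singleton]
  have step2 : (∫ y in a..b, ψ y) ≤ (∫ y in a..b, φ y) + ε / 2 := by
    have hint2 : IntervalIntegrable (U.indicator fun _ => (K : ℝ)) volume a b :=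
      hindint.intervalIntegrable
    have hval : (∫ y in a..b, U.indicator (fun _ => (K : ℝ)) y) ≤ ε / 2 := by
      have h1 : (volume (Ioc a b ∩ U)).toReal ≤ ε / (2 * ((K : ℝ) + 1)) := by
        have h2 : volume (Ioc a b ∩ U) ≤ ENNReal.ofReal (ε / (2 * ((K : ℝ) + 1))) :=
          le_trans (measure_mono inter_subset_right) hUvol.le
        calc (volume (Ioc a b ∩ U)).toReal
            ≤ (ENNReal.ofReal (ε / (2 * ((K : ℝ) + 1)))).toReal :=
              ENNReal.toReal_mono ofReal_ne_top h2
          _ = ε / (2 * ((K : ℝ) + 1)) :=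
              ENNReal.toReal_ofReal (div_pos εpos (by positivity)).le
      have hKpos : (0 : ℝ) < (K : ℝ) + 1 := by positivity
      calc (∫ y in a..b, U.indicator (fun _ => (K : ℝ)) y)
          = (volume (Ioc a b ∩ U)).toReal * (K : ℝ) := by
            rw [intervalIntegral.integral_of_le hab, setIntegral_indicator hUmeas,
              setIntegral_const, smul_eq_mul, measureReal_def]
        _ ≤ (ε / (2 * ((K : ℝ) + 1))) * (K : ℝ) :=
            mul_le_mul_of_nonneg_right h1 K.coe_nonneg
        _ ≤ ε / 2 := by
            rw [div_mul_eq_mul_div, div_le_div_iff₀ (by positivity) (by norm_num)]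
            nlinarith [εpos.le, K.coe_nonneg]
    calc (∫ y in a..b, ψ y)
        = (∫ y in a..b, φ y) + ∫ y in a..b, U.indicator (fun _ => (K : ℝ)) y :=
          intervalIntegral.integral_add hφIoc hint2
      _ ≤ (∫ y in a..b, φ y) + ε / 2 := add_le_add_right hval _
  calc ‖f b - f a‖ ≤ ∫ u in a..b, (G' u).toReal := hfinal
    _ ≤ (∫ y in a..b, ψ y) + ε / 2 := step1
    _ ≤ ((∫ y in a..b, φ y) + ε / 2) + ε / 2 := add_le_add_left step2 _
    _ = (∫ y in a..b, φ y) + ε := by ring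

/-- `ℝ^n` with the Euclidean norm. -/
abbrev Euc (n : ℕ) : Type := EuclideanSpace ℝ (Fin n)

/-- The gauge distance of the two-step Carnot group `G_B = ℝ^m × ℝ^s` in exponential
coordinates: `d_B(p,q) = N(p⁻¹·q)` with `N(x,y) = |x| + |y|^{1/2}`, where
`p⁻¹·q = (q₁ - p₁, q₂ - p₂ - ½ B(p₁, q₁))`. -/
noncomputable def gaugeDist {m s : ℕ}
    (B : Euc m →L[ℝ] Euc m →L[ℝ] Euc s) (p q : Euc m × Euc s) : ℝ :=
  ‖q.1 - p.1‖ + Real.sqrt ‖q.2 - p.2 - (1 / 2 : ℝ) • B p.1 q.1‖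

/-- length estimate for horizontal (contact) Lipschitz curves in a two-step
group, with the explicit constant `C = 1 + (‖B‖/2)^{1/2}`. -/
theorem stmt1 {m s : ℕ} (hm : 1 ≤ m) (hs : 1 ≤ s)
    (B : Euc m →L[ℝ] Euc m →L[ℝ] Euc s)
    (hB : ∀ u v, B u v = - B v u)
    (a b : ℝ)
    (γ₁ : ℝ → Euc m) (γ₂ : ℝ → Euc s) (K : NNReal)
    (h₁ : LipschitzOnWith K γ₁ (Set.Icc a b))
    (h₂ : LipschitzOnWith K γ₂ (Set.Icc a b))
    (hcontact : ∀ᵐ t ∂ volume.restrict (Set.Ioo a b),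
      DifferentiableAt ℝ γ₁ t ∧
      HasDerivAt γ₂ ((1 / 2 : ℝ) • B (γ₁ t) (deriv γ₁ t)) t) :
    ∀ τ₁ τ₂, a ≤ τ₁ → τ₁ ≤ τ₂ → τ₂ ≤ b →
      gaugeDist B (γ₁ τ₁, γ₂ τ₁) (γ₁ τ₂, γ₂ τ₂) ≤
        (1 + Real.sqrt (‖B‖ / 2)) * ∫ t in τ₁..τ₂, ‖deriv γ₁ t‖ := by
  intro τ₁ τ₂ haτ₁ hτ hτ₂
  set φ : ℝ → ℝ := fun t => ‖deriv γ₁ t‖ with hφdef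
  have hφ0 : ∀ x, 0 ≤ φ x := fun x => norm_nonneg _
  have hφmeas : Measurable φ := (measurable_deriv γ₁).norm
  have hbound : ∀ᵐ t ∂ volume.restrict (Set.Icc a b), ‖φ t‖ ≤ (K : ℝ) := by
    rw [← Measure.restrict_congr_set Ioo_ae_eq_Icc]
    filter_upwards [hcontact, ae_restrict_mem measurableSet_Ioo] with t ht htIoo
    have h2 : ‖deriv γ₁ t‖ ≤ (K : ℝ) := by
      have hop := norm_fderiv_le_of_lipschitzOn ℝ (Icc_mem_nhds htIoo.1 htIoo.2) h₁
      calc ‖deriv γ₁ t‖ = ‖fderiv ℝ γ₁ t 1‖ := by rw [fderiv_apply_one_eq_deriv]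
        _ ≤ ‖fderiv ℝ γ₁ t‖ * ‖(1 : ℝ)‖ := (fderiv ℝ γ₁ t).le_opNorm 1
        _ = ‖fderiv ℝ γ₁ t‖ := by simp
        _ ≤ (K : ℝ) := hop
    simpa [hφdef, abs_of_nonneg (norm_nonneg _)] using h2
  have hφint : IntegrableOn φ (Set.Icc a b) := by
    apply Integrable.mono' (g := fun _ => (K : ℝ))
    · exact integrableOn_const (by rw [Real.volume_Icc]; exact ofReal_ne_top)
    · exact hφmeas.aestronglyMeasurable
    · exact hbound
  have key : ∀ t₁ t₂ : ℝ, a ≤ t₁ → t₁ ≤ t₂ → t₂ ≤ b →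
      ‖γ₁ t₂ - γ₁ t₁‖ ≤ ∫ t in t₁..t₂, φ t := by
    intro t₁ t₂ k1 k2 k3
    apply lip_norm_sub_le_integral (f' := deriv γ₁) k2 (h₁.mono (Set.Icc_subset_Icc k1 k3))
      (hφint.mono_set (Set.Icc_subset_Icc k1 k3)) hφ0
    have hsub : volume.restrict (Set.Ioo t₁ t₂) ≤ volume.restrict (Set.Ioo a b) :=
      Measure.restrict_mono (Set.Ioo_subset_Ioo k1 k3) le_rfl
    filter_upwards [ae_mono hsub hcontact] with t ht
    exact ⟨ht.1.hasDerivAt, le_refl _⟩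
  set L : ℝ := ∫ t in τ₁..τ₂, φ t with hLdef
  have hL0 : 0 ≤ L := intervalIntegral.integral_nonneg hτ fun x _ => hφ0 x
  have hφII : IntervalIntegrable φ volume τ₁ τ₂ := by
    rw [intervalIntegrable_iff_integrableOn_Ioc_of_le hτ]
    exact hφint.mono_set fun x hx => ⟨haτ₁.trans hx.1.le, hx.2.trans hτ₂⟩
  have hLt : ∀ t, τ₁ ≤ t → t ≤ τ₂ → ‖γ₁ t - γ₁ τ₁‖ ≤ L := by
    intro t k1 k2
    refine (key τ₁ t haτ₁ k1 (k2.trans hτ₂)).trans ?_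
    apply intervalIntegral.integral_mono_interval le_rfl k1 k2 ?_ hφII
    filter_upwards with x using hφ0 x
  -- second (vertical) component
  set C : Euc m →L[ℝ] Euc s := (1 / 2 : ℝ) • B (γ₁ τ₁) with hCdef
  set g : ℝ → Euc s := fun t => γ₂ t - γ₂ τ₁ - C (γ₁ t) with hgdef
  have hglip : LipschitzOnWith (K + ‖C‖₊ * K) g (Set.Icc τ₁ τ₂) := by
    apply LipschitzOnWith.of_dist_le_mul
    intro x hx y hy
    have hx' : x ∈ Set.Icc a b := Set.Icc_subset_Icc haτ₁ hτ₂ hx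
    have hy' : y ∈ Set.Icc a b := Set.Icc_subset_Icc haτ₁ hτ₂ hy
    have e1 : dist (γ₂ x) (γ₂ y) ≤ (K : ℝ) * dist x y := h₂.dist_le_mul x hx' y hy'
    have e2 : dist (γ₁ x) (γ₁ y) ≤ (K : ℝ) * dist x y := h₁.dist_le_mul x hx' y hy'
    have e3 : dist (g x) (g y) ≤ dist (γ₂ x) (γ₂ y) + ‖C‖ * dist (γ₁ x) (γ₁ y) := by
      rw [dist_eq_norm, dist_eq_norm, dist_eq_norm]
      have heq : g x - g y = (γ₂ x - γ₂ y) - C (γ₁ x - γ₁ y) := by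
        simp only [hgdef, map_sub]; abel
      rw [heq]
      exact (norm_sub_le _ _).trans (add_le_add_right (C.le_opNorm _) _)
    have e4 : (0 : ℝ) ≤ dist x y := dist_nonneg
    calc dist (g x) (g y) ≤ dist (γ₂ x) (γ₂ y) + ‖C‖ * dist (γ₁ x) (γ₁ y) := e3
      _ ≤ (K : ℝ) * dist x y + ‖C‖ * ((K : ℝ) * dist x y) :=
          add_le_add e1 (mul_le_mul_of_nonneg_left e2 (norm_nonneg C))
      _ = ((K + ‖C‖₊ * K : NNReal) : ℝ) * dist x y := by
          push_cast
          ring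
  set φ₂ : ℝ → ℝ := fun t => (‖B‖ / 2 * L) * φ t with hφ₂def
  have hφ₂0 : ∀ x, 0 ≤ φ₂ x := fun x =>
    mul_nonneg (mul_nonneg (by positivity) hL0) (hφ0 x)
  have hφ₂int : IntegrableOn φ₂ (Set.Icc τ₁ τ₂) :=
    (hφint.mono_set (Set.Icc_subset_Icc haτ₁ hτ₂)).const_mul _
  have hgder : ∀ᵐ t ∂ volume.restrict (Set.Ioo τ₁ τ₂),
      HasDerivAt g ((1 / 2 : ℝ) • B (γ₁ t - γ₁ τ₁) (deriv γ₁ t)) t ∧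
        ‖(1 / 2 : ℝ) • B (γ₁ t - γ₁ τ₁) (deriv γ₁ t)‖ ≤ φ₂ t := by
    have hsub : volume.restrict (Set.Ioo τ₁ τ₂) ≤ volume.restrict (Set.Ioo a b) :=
      Measure.restrict_mono (Set.Ioo_subset_Ioo haτ₁ hτ₂) le_rfl
    filter_upwards [ae_mono hsub hcontact, ae_restrict_mem measurableSet_Ioo] with t ht htmem
    have hd1 : HasDerivAt γ₁ (deriv γ₁ t) t := ht.1.hasDerivAt
    have hdC : HasDerivAt (fun u => C (γ₁ u)) (C (deriv γ₁ t)) t :=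
      C.hasFDerivAt.comp_hasDerivAt t hd1
    have hdg : HasDerivAt g ((1 / 2 : ℝ) • B (γ₁ t) (deriv γ₁ t) - C (deriv γ₁ t)) t :=
      (ht.2.sub_const (γ₂ τ₁)).sub hdC
    have heq : (1 / 2 : ℝ) • B (γ₁ t) (deriv γ₁ t) - C (deriv γ₁ t)
        = (1 / 2 : ℝ) • B (γ₁ t - γ₁ τ₁) (deriv γ₁ t) := by
      simp only [hCdef, map_sub, ContinuousLinearMap.sub_apply,
        ContinuousLinearMap.smul_apply, smul_sub]
    rw [heq] at hdg
    refine ⟨hdg, ?_⟩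
    have h1 : ‖(1 / 2 : ℝ) • B (γ₁ t - γ₁ τ₁) (deriv γ₁ t)‖
        ≤ 1 / 2 * (‖B‖ * ‖γ₁ t - γ₁ τ₁‖ * ‖deriv γ₁ t‖) := by
      rw [norm_smul, Real.norm_eq_abs, abs_of_nonneg (by norm_num : (0 : ℝ) ≤ 1 / 2)]
      exact mul_le_mul_of_nonneg_left (B.le_opNorm₂ _ _) (by norm_num)
    refine h1.trans ?_
    have h2 : ‖γ₁ t - γ₁ τ₁‖ ≤ L := hLt t htmem.1.le htmem.2.le
    calc 1 / 2 * (‖B‖ * ‖γ₁ t - γ₁ τ₁‖ * ‖deriv γ₁ t‖)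
        ≤ 1 / 2 * (‖B‖ * L * ‖deriv γ₁ t‖) := by
          apply mul_le_mul_of_nonneg_left _ (by norm_num)
          exact mul_le_mul_of_nonneg_right
            (mul_le_mul_of_nonneg_left h2 (norm_nonneg B)) (norm_nonneg _)
      _ = φ₂ t := by simp only [hφ₂def, hφdef]; ring
  have key2 : ‖g τ₂ - g τ₁‖ ≤ ∫ t in τ₁..τ₂, φ₂ t :=
    lip_norm_sub_le_integral hτ hglip hφ₂int hφ₂0 hgder
  have hgτ₁ : g τ₁ = 0 := by
    have hBxx : B (γ₁ τ₁) (γ₁ τ₁) = 0 := by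
      have h := hB (γ₁ τ₁) (γ₁ τ₁)
      have h2 : (2 : ℝ) • B (γ₁ τ₁) (γ₁ τ₁) = 0 := by
        rw [two_smul]
        nth_rewrite 2 [h]
        simp
      exact (smul_eq_zero.1 h2).resolve_left (by norm_num)
    simp [hgdef, hCdef, hBxx]
  have hsqrt : Real.sqrt ‖g τ₂ - g τ₁‖ ≤ Real.sqrt (‖B‖ / 2) * L := by
    have h1 : ‖g τ₂ - g τ₁‖ ≤ ‖B‖ / 2 * (L * L) := by
      refine key2.trans ?_
      rw [hφ₂def, intervalIntegral.integral_const_mul]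
      apply le_of_eq
      rw [← hLdef]; ring
    calc Real.sqrt ‖g τ₂ - g τ₁‖ ≤ Real.sqrt (‖B‖ / 2 * (L * L)) := Real.sqrt_le_sqrt h1
      _ = Real.sqrt (‖B‖ / 2) * L := by
        rw [Real.sqrt_mul (by positivity), Real.sqrt_mul_self hL0]
  have hfirst : ‖γ₁ τ₂ - γ₁ τ₁‖ ≤ L := key τ₁ τ₂ haτ₁ hτ hτ₂
  have hgauge : gaugeDist B (γ₁ τ₁, γ₂ τ₁) (γ₁ τ₂, γ₂ τ₂)
      = ‖γ₁ τ₂ - γ₁ τ₁‖ + Real.sqrt ‖g τ₂ - g τ₁‖ := by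
    rw [hgτ₁, sub_zero]
    simp only [gaugeDist, hgdef, hCdef, ContinuousLinearMap.smul_apply]
  rw [hgauge]
  calc ‖γ₁ τ₂ - γ₁ τ₁‖ + Real.sqrt ‖g τ₂ - g τ₁‖
      ≤ L + Real.sqrt (‖B‖ / 2) * L := add_le_add hfirst hsqrt
    _ = (1 + Real.sqrt (‖B‖ / 2)) * L := by ring
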